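/- Let A be a symmetric real n×n matrix whose characteristic polynomial equals ∏_{s=1}^{n}(X − λ_s) for real numbers λ_1,…,λ_n, and let k ≥ 1. Then the characteristic polynomial of A^{⊙k} equals ∏_i (X − ∏_{s∈i} λ_s), where the product runs over all binom(n+k−1,k) multisets i of size k over {1,…,n} and ∏_{s∈i} λ_s denotes the product of λ_s over the elements of i counted with multiplicity. In particular, the eigenvalues of A^{⊙k} are exactly the products λ_{i₁}λ_{i₂}⋯λ_{i_k} with 1 ≤ i₁ ≤ i₂ ≤ ⋯ ≤ i_k ≤ n. -/

import Mathlib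

/-- The set of `k`-tuples over `Fin n` whose underlying multiset is `i`.
Its cardinality is `C(i) = k!/(m_1(i)! ⋯ m_n(i)!)`. -/
def tuplesOf {n k : ℕ} (i : Sym (Fin n) k) : Finset (Fin k → Fin n) :=
  Finset.univ.filter fun p => (↑(List.ofFn p) : Multiset (Fin n)) = ↑i

/-- The `k`-th symmetric tensor power of an `n × n` real matrix, with rows and columns
indexed by the multisets of size `k` over `{1,…,n}`:
`[A^{⊙k}]_{i,j} = (1/√(C(i)·C(j))) · Σ_{p,q} ∏_ℓ A_{p_ℓ,q_ℓ}`. -/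
noncomputable def symPow {n : ℕ} (k : ℕ) (A : Matrix (Fin n) (Fin n) ℝ) :
    Matrix (Sym (Fin n) k) (Sym (Fin n) k) ℝ := fun i j =>
  (Real.sqrt (((tuplesOf i).card : ℝ) * ((tuplesOf j).card : ℝ)))⁻¹ *
    ∑ p ∈ tuplesOf i, ∑ q ∈ tuplesOf j, ∏ ℓ : Fin k, A (p ℓ) (q ℓ)


namespace SymPowAux

variable {n k : ℕ}

lemma mem_tuplesOf {i : Sym (Fin n) k} {p : Fin k → Fin n} :
    p ∈ tuplesOf i ↔ (↑(List.ofFn p) : Multiset (Fin n)) = ↑i := by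
  simp [tuplesOf]

/-- the canonical multiset of a tuple as a `Sym`. -/
def toSym (p : Fin k → Fin n) : Sym (Fin n) k :=
  ⟨↑(List.ofFn p), by simp⟩

lemma mem_tuplesOf' {i : Sym (Fin n) k} {p : Fin k → Fin n} :
    p ∈ tuplesOf i ↔ toSym p = i := by
  rw [mem_tuplesOf]
  constructor
  · intro h; exact Sym.coe_injective h
  · intro h; rw [← h]; rfl

lemma sum_tuplesOf (f : (Fin k → Fin n) → ℝ) :
    ∑ i : Sym (Fin n) k, ∑ p ∈ tuplesOf i, f p = ∑ p : Fin k → Fin n, f p := by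
  have : ∀ i : Sym (Fin n) k, tuplesOf i = Finset.univ.filter fun p => toSym p = i := by
    intro i; ext p
    simp only [Finset.mem_filter, Finset.mem_univ, true_and, ← mem_tuplesOf', mem_tuplesOf]
  simp_rw [this]
  exact Finset.sum_fiberwise_of_maps_to (fun p _ => Finset.mem_univ (toSym p)) f

lemma tuplesOf_nonempty (i : Sym (Fin n) k) : (tuplesOf i).Nonempty := by
  obtain ⟨l, hl⟩ : ∃ l : List (Fin n), (↑l : Multiset (Fin n)) = ↑i :=
    ⟨(↑i : Multiset (Fin n)).toList, Multiset.coe_toList _⟩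
  have hlen : l.length = k := by
    have h2 : Multiset.card (↑l : Multiset (Fin n)) = k := by rw [hl]; exact i.2
    simpa using h2
  refine ⟨fun ℓ => l.get (Fin.cast hlen.symm ℓ), ?_⟩
  rw [mem_tuplesOf, ← hl]
  congr 1
  apply List.ext_get
  · simp [hlen]
  · intro m h1 h2
    simp [List.get_ofFn]

lemma exists_perm_comp {α : Type*} [LinearOrder α] {m : ℕ} {f g : Fin m → α}
    (h : (↑(List.ofFn f) : Multiset α) = ↑(List.ofFn g)) :
    ∃ σ : Equiv.Perm (Fin m), f = g ∘ σ := by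
  have hp : (List.ofFn f).Perm (List.ofFn g) := Multiset.coe_eq_coe.mp h
  have h1 : List.ofFn (f ∘ Tuple.sort f) = List.ofFn (g ∘ Tuple.sort g) :=
    List.Perm.eq_of_sortedLE
      (Tuple.monotone_sort f).sortedLE_ofFn (Tuple.monotone_sort g).sortedLE_ofFn
      ((((Tuple.sort f).ofFn_comp_perm f).trans hp).trans
        ((Tuple.sort g).ofFn_comp_perm g).symm)
  have h2 : f ∘ Tuple.sort f = g ∘ Tuple.sort g := List.ofFn_injective h1
  refine ⟨(Tuple.sort f).symm.trans (Tuple.sort g), ?_⟩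
  funext x
  have := congrFun h2 ((Tuple.sort f).symm x)
  simpa using this

lemma comp_mem_tuplesOf {i : Sym (Fin n) k} {p : Fin k → Fin n} (σ : Equiv.Perm (Fin k))
    (hp : p ∈ tuplesOf i) : p ∘ σ ∈ tuplesOf i := by
  rw [mem_tuplesOf] at hp ⊢
  rw [← hp]
  exact Multiset.coe_eq_coe.mpr (σ.ofFn_comp_perm p)

/-- reindexing invariance for sums over `tuplesOf`. -/
lemma sum_prod_comp (g : Fin n → Fin n → ℝ) (i : Sym (Fin n) k) (σ : Equiv.Perm (Fin k))
    (r : Fin k → Fin n) :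
    ∑ p ∈ tuplesOf i, ∏ ℓ : Fin k, g (p ℓ) (r (σ ℓ)) =
      ∑ p ∈ tuplesOf i, ∏ ℓ : Fin k, g (p ℓ) (r ℓ) := by
  refine Finset.sum_nbij' (fun p => p ∘ σ.symm) (fun p => p ∘ σ)
    (fun p hp => comp_mem_tuplesOf σ.symm hp) (fun p hp => comp_mem_tuplesOf σ hp)
    (fun p _ => by funext x; simp) (fun p _ => by funext x; simp) (fun p _ => ?_)
  have key := Equiv.prod_comp σ (fun m => g (p (σ.symm m)) (r m))
  simp only [Equiv.symm_apply_apply] at key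
  exact key

/-- `F r := ∑_{p ∈ T_i} ∏ g(p_ℓ, r_ℓ)` is constant for `r` in a fiber `T_m`. -/
lemma sum_prod_const (g : Fin n → Fin n → ℝ) (i m : Sym (Fin n) k) {r r' : Fin k → Fin n}
    (hr : r ∈ tuplesOf m) (hr' : r' ∈ tuplesOf m) :
    ∑ p ∈ tuplesOf i, ∏ ℓ : Fin k, g (p ℓ) (r ℓ) =
      ∑ p ∈ tuplesOf i, ∏ ℓ : Fin k, g (p ℓ) (r' ℓ) := by
  rw [mem_tuplesOf] at hr hr'
  obtain ⟨σ, hσ⟩ := exists_perm_comp (hr'.trans hr.symm)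
  rw [← sum_prod_comp g i σ r]
  refine Finset.sum_congr rfl fun p _ => Finset.prod_congr rfl fun ℓ _ => ?_
  rw [hσ]; rfl

lemma card_pos (i : Sym (Fin n) k) : (0:ℝ) < (tuplesOf i).card := by
  exact_mod_cast Finset.card_pos.mpr (tuplesOf_nonempty i)

lemma sqrt_card_pos (i : Sym (Fin n) k) : (0:ℝ) < Real.sqrt (tuplesOf i).card :=
  Real.sqrt_pos.mpr (card_pos i)

lemma coeff_split (i j : Sym (Fin n) k) :
    (Real.sqrt (((tuplesOf i).card : ℝ) * ((tuplesOf j).card : ℝ)))⁻¹ =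
      (Real.sqrt (tuplesOf i).card)⁻¹ * (Real.sqrt (tuplesOf j).card)⁻¹ := by
  rw [Real.sqrt_mul (le_of_lt (card_pos i)), mul_inv]

lemma symPow_mul (A B : Matrix (Fin n) (Fin n) ℝ) :
    symPow k (A * B) = symPow k A * symPow k B := by
  funext i j
  -- abbreviations
  set F : (Fin k → Fin n) → ℝ := fun r => ∑ p ∈ tuplesOf i, ∏ ℓ : Fin k, A (p ℓ) (r ℓ) with hF
  set G : (Fin k → Fin n) → ℝ := fun r => ∑ q ∈ tuplesOf j, ∏ ℓ : Fin k, B (r ℓ) (q ℓ) with hG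
  have lhs_eq : symPow k (A * B) i j =
      (Real.sqrt (tuplesOf i).card)⁻¹ * (Real.sqrt (tuplesOf j).card)⁻¹ *
        ∑ r : Fin k → Fin n, F r * G r := by
    rw [symPow, coeff_split]
    congr 1
    have expand : ∀ p q : Fin k → Fin n,
        (∏ ℓ : Fin k, (A * B) (p ℓ) (q ℓ)) =
          ∑ r : Fin k → Fin n, ∏ ℓ : Fin k, A (p ℓ) (r ℓ) * B (r ℓ) (q ℓ) := by
      intro p q
      have : ∀ ℓ : Fin k, (A * B) (p ℓ) (q ℓ) = ∑ x : Fin n, A (p ℓ) x * B x (q ℓ) :=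
        fun ℓ => Matrix.mul_apply
      rw [Finset.prod_congr rfl fun ℓ _ => this ℓ, Finset.prod_univ_sum]
      rw [← Fintype.piFinset_univ]
    calc ∑ p ∈ tuplesOf i, ∑ q ∈ tuplesOf j, ∏ ℓ : Fin k, (A * B) (p ℓ) (q ℓ)
        = ∑ p ∈ tuplesOf i, ∑ q ∈ tuplesOf j, ∑ r : Fin k → Fin n,
            (∏ ℓ : Fin k, A (p ℓ) (r ℓ)) * ∏ ℓ : Fin k, B (r ℓ) (q ℓ) := by
          refine Finset.sum_congr rfl fun p _ => Finset.sum_congr rfl fun q _ => ?_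
          rw [expand p q]
          exact Finset.sum_congr rfl fun r _ => Finset.prod_mul_distrib
      _ = ∑ p ∈ tuplesOf i, ∑ r : Fin k → Fin n, ∑ q ∈ tuplesOf j,
            (∏ ℓ : Fin k, A (p ℓ) (r ℓ)) * ∏ ℓ : Fin k, B (r ℓ) (q ℓ) :=
          Finset.sum_congr rfl fun p _ => Finset.sum_comm
      _ = ∑ r : Fin k → Fin n, ∑ p ∈ tuplesOf i, ∑ q ∈ tuplesOf j,
            (∏ ℓ : Fin k, A (p ℓ) (r ℓ)) * ∏ ℓ : Fin k, B (r ℓ) (q ℓ) :=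
          Finset.sum_comm
      _ = ∑ r : Fin k → Fin n, F r * G r := by
          refine Finset.sum_congr rfl fun r _ => ?_
          rw [hF, hG, Finset.sum_mul]
          exact Finset.sum_congr rfl fun p _ => (Finset.mul_sum _ _ _).symm
  rw [lhs_eq, Matrix.mul_apply]
  have term_eq : ∀ m : Sym (Fin n) k, symPow k A i m * symPow k B m j =
      (Real.sqrt (tuplesOf i).card)⁻¹ * (Real.sqrt (tuplesOf j).card)⁻¹ *
        ∑ r ∈ tuplesOf m, F r * G r := by
    intro m
    obtain ⟨r₀, hr₀⟩ := tuplesOf_nonempty m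
    have hFc : ∀ r ∈ tuplesOf m, F r = F r₀ := fun r hr => sum_prod_const A i m hr hr₀
    have hGc : ∀ r ∈ tuplesOf m, G r = G r₀ := fun r hr =>
      sum_prod_const (fun a b => B b a) j m hr hr₀
    have hPA : ∑ p ∈ tuplesOf i, ∑ r ∈ tuplesOf m, ∏ ℓ : Fin k, A (p ℓ) (r ℓ) =
        ((tuplesOf m).card : ℝ) * F r₀ := by
      rw [Finset.sum_comm]
      rw [Finset.sum_congr rfl hFc, Finset.sum_const, nsmul_eq_mul]
    have hPB : ∑ r ∈ tuplesOf m, ∑ q ∈ tuplesOf j, ∏ ℓ : Fin k, B (r ℓ) (q ℓ) =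
        ((tuplesOf m).card : ℝ) * G r₀ := by
      rw [Finset.sum_congr rfl hGc, Finset.sum_const, nsmul_eq_mul]
    have hFG : ∑ r ∈ tuplesOf m, F r * G r = ((tuplesOf m).card : ℝ) * (F r₀ * G r₀) := by
      rw [Finset.sum_congr rfl fun r hr => by rw [hFc r hr, hGc r hr],
        Finset.sum_const, nsmul_eq_mul]
    rw [symPow, symPow, coeff_split, coeff_split, hPA, hPB, hFG]
    have hs := sqrt_card_pos m
    set sm : ℝ := Real.sqrt ((tuplesOf m).card : ℝ) with hsm
    have hsq : sm * sm = ((tuplesOf m).card : ℝ) := Real.mul_self_sqrt (le_of_lt (card_pos m))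
    rw [← hsq]
    have h1 : sm * sm⁻¹ = 1 := mul_inv_cancel₀ hs.ne'
    linear_combination ((Real.sqrt ((tuplesOf i).card : ℝ))⁻¹ *
      (Real.sqrt ((tuplesOf j).card : ℝ))⁻¹ * (sm * sm) * F r₀ * G r₀ *
      (sm * sm⁻¹ + 1)) * h1
  rw [Finset.sum_congr rfl fun m _ => term_eq m, ← Finset.mul_sum, sum_tuplesOf]

lemma prod_eq_of_mem_tuplesOf {d : Fin n → ℝ} {i : Sym (Fin n) k} {p : Fin k → Fin n}
    (hp : p ∈ tuplesOf i) :
    ∏ ℓ : Fin k, d (p ℓ) = ((i : Multiset (Fin n)).map d).prod := by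
  rw [mem_tuplesOf] at hp
  rw [← hp]
  simp [List.map_ofFn, List.prod_ofFn, Function.comp]

lemma symPow_diagonal (d : Fin n → ℝ) :
    symPow k (Matrix.diagonal d) =
      Matrix.diagonal (fun i : Sym (Fin n) k => ((i : Multiset (Fin n)).map d).prod) := by
  funext i j
  have entry : ∀ p q : Fin k → Fin n,
      (∏ ℓ : Fin k, Matrix.diagonal d (p ℓ) (q ℓ)) =
        if p = q then ∏ ℓ : Fin k, d (p ℓ) else 0 := by
    intro p q
    by_cases hpq : p = q
    · subst hpq; simp [Matrix.diagonal_apply_eq]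
    · obtain ⟨ℓ, hℓ⟩ := Function.ne_iff.mp hpq
      rw [if_neg hpq]
      exact Finset.prod_eq_zero (Finset.mem_univ ℓ) (Matrix.diagonal_apply_ne d hℓ)
  rw [symPow]
  have inner : ∀ p : Fin k → Fin n,
      ∑ q ∈ tuplesOf j, (∏ ℓ : Fin k, Matrix.diagonal d (p ℓ) (q ℓ)) =
        if p ∈ tuplesOf j then ∏ ℓ : Fin k, d (p ℓ) else 0 := by
    intro p
    rw [Finset.sum_congr rfl fun q _ => entry p q]
    exact Finset.sum_ite_eq (tuplesOf j) p _
  rw [Finset.sum_congr rfl fun p _ => inner p]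
  by_cases hij : i = j
  · subst hij
    have : ∑ p ∈ tuplesOf i, (if p ∈ tuplesOf i then ∏ ℓ : Fin k, d (p ℓ) else 0) =
        ((tuplesOf i).card : ℝ) * ((i : Multiset (Fin n)).map d).prod := by
      rw [Finset.sum_congr rfl fun p hp => by
        rw [if_pos hp, prod_eq_of_mem_tuplesOf hp]]
      rw [Finset.sum_const, nsmul_eq_mul]
    rw [this, Matrix.diagonal_apply_eq, Real.sqrt_mul_self (le_of_lt (card_pos i)),
      ← mul_assoc, inv_mul_cancel₀ (card_pos i).ne', one_mul]
  · have : ∑ p ∈ tuplesOf i, (if p ∈ tuplesOf j then ∏ ℓ : Fin k, d (p ℓ) else 0) = 0 := by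
      refine Finset.sum_eq_zero fun p hp => ?_
      rw [if_neg]
      intro hpj
      exact hij (Sym.coe_injective ((mem_tuplesOf.mp hp).symm.trans (mem_tuplesOf.mp hpj)))
    rw [this, Matrix.diagonal_apply_ne _ hij, mul_zero]

lemma symPow_one : symPow k (1 : Matrix (Fin n) (Fin n) ℝ) = 1 := by
  rw [← Matrix.diagonal_one, symPow_diagonal]
  convert Matrix.diagonal_one
  simp

open Polynomial in
lemma charpoly_diagonal {ι R : Type*} [Fintype ι] [DecidableEq ι] [CommRing R] (d : ι → R) :
    (Matrix.diagonal d).charpoly = ∏ i : ι, (X - C (d i)) := by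
  rw [Matrix.charpoly]
  have : (Matrix.diagonal d).charmatrix = Matrix.diagonal fun i => (X : R[X]) - C (d i) := by
    ext a b
    by_cases h : a = b
    · subst h; simp
    · simp [h, Matrix.diagonal_apply_ne _ h]
  rw [this, Matrix.det_diagonal]

open Polynomial in
lemma charpoly_conj {ι R : Type*} [Fintype ι] [DecidableEq ι] [CommRing R]
    (P M Q : Matrix ι ι R) (hPQ : P * Q = 1) :
    (P * M * Q).charpoly = M.charpoly := by
  have hQP : Q * P = 1 := mul_eq_one_comm.mp hPQ
  have hmapPQ : (P.map (C : R → R[X])) * (Q.map C) = 1 := by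
    rw [← Matrix.map_mul, hPQ]
    simp [Matrix.map_one]
  have key : (P * M * Q).charmatrix = (P.map C) * M.charmatrix * (Q.map C) := by
    rw [Matrix.charmatrix, Matrix.charmatrix]
    simp only [RingHom.mapMatrix_apply]
    rw [Matrix.mul_sub, Matrix.sub_mul]
    congr 1
    · have cQ : (Matrix.scalar ι (X : R[X])) * (Q.map C) = (Q.map C) * Matrix.scalar ι X :=
        (Matrix.scalar_commute (X : R[X]) (fun r' => Commute.all _ _) (Q.map C)).eq
      rw [Matrix.mul_assoc, cQ, ← Matrix.mul_assoc, hmapPQ, Matrix.one_mul]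
    · rw [← Matrix.map_mul, ← Matrix.map_mul]
  rw [Matrix.charpoly, Matrix.charpoly, key, Matrix.det_mul, Matrix.det_mul]
  have : (P.map (C : R → R[X])).det * (Q.map C).det = 1 := by
    rw [← Matrix.det_mul, hmapPQ, Matrix.det_one]
  calc (P.map (C : R → R[X])).det * M.charmatrix.det * (Q.map C).det
      = (P.map (C : R → R[X])).det * (Q.map C).det * M.charmatrix.det := by ring
    _ = M.charmatrix.det := by rw [this, one_mul]

lemma coe_ofFn_eq_univ_map {α : Type*} (f : Fin n → α) :
    (↑(List.ofFn f) : Multiset α) = Finset.univ.val.map f := by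
  rw [List.ofFn_eq_map, Fin.univ_def]
  rfl

end SymPowAux

open SymPowAux Polynomial in
theorem symPow_charpoly {n : ℕ} (k : ℕ) (hk : 1 ≤ k)
    (A : Matrix (Fin n) (Fin n) ℝ) (hA : ∀ a b, A a b = A b a) (lam : Fin n → ℝ)
    (hchar : A.charpoly = ∏ s : Fin n, (X - C (lam s))) :
    (symPow k A).charpoly =
      ∏ i : Sym (Fin n) k, (X - C (((i : Multiset (Fin n)).map lam).prod)) := by
  classical
  have hH : A.IsHermitian := by
    ext a b
    simpa [Matrix.conjTranspose_apply] using hA b a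
  set U : Matrix (Fin n) (Fin n) ℝ := ↑hH.eigenvectorUnitary with hU
  set ev : Fin n → ℝ := hH.eigenvalues with hev
  have hspec : A = U * Matrix.diagonal ev * star U := by
    have h := hH.spectral_theorem
    rw [RCLike.ofReal_real_eq_id, Function.id_comp] at h
    exact h
  have hUU : U * star U = 1 := Matrix.mem_unitaryGroup_iff.mp hH.eigenvectorUnitary.2
  have hsym : symPow k A = symPow k U * symPow k (Matrix.diagonal ev) * symPow k (star U) := by
    conv_lhs => rw [hspec]
    rw [symPow_mul, symPow_mul]
  have hPQ : symPow k U * symPow k (star U) = 1 := by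
    rw [← symPow_mul, hUU, symPow_one]
  have h1 : (symPow k A).charpoly = (symPow k (Matrix.diagonal ev)).charpoly := by
    rw [hsym]
    exact charpoly_conj _ _ _ hPQ
  have hAD : A.charpoly = (Matrix.diagonal ev).charpoly := by
    conv_lhs => rw [hspec]
    exact charpoly_conj _ _ _ hUU
  have hprod : (∏ s : Fin n, (X - C (lam s))) = ∏ s : Fin n, (X - C (ev s)) := by
    rw [← hchar, hAD, charpoly_diagonal]
  have hms : Finset.univ.val.map lam = Finset.univ.val.map ev := by
    have h2 := congrArg Polynomial.roots hprod
    rw [Finset.prod_eq_multiset_prod, Finset.prod_eq_multiset_prod] at h2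
    have e1 : Finset.univ.val.map (fun s => X - C (lam s)) =
        (Finset.univ.val.map lam).map (fun a => X - C a) := by
      rw [Multiset.map_map]; rfl
    have e2 : Finset.univ.val.map (fun s => X - C (ev s)) =
        (Finset.univ.val.map ev).map (fun a => X - C a) := by
      rw [Multiset.map_map]; rfl
    rwa [e1, e2, Polynomial.roots_multiset_prod_X_sub_C,
      Polynomial.roots_multiset_prod_X_sub_C] at h2
  obtain ⟨σ, hσ⟩ : ∃ σ : Equiv.Perm (Fin n), lam = ev ∘ σ := by
    apply exists_perm_comp
    rw [coe_ofFn_eq_univ_map, coe_ofFn_eq_univ_map]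
    exact hms
  rw [h1, symPow_diagonal, charpoly_diagonal]
  refine (Fintype.prod_equiv (Sym.equivCongr σ)
    (fun i : Sym (Fin n) k => X - C (((i : Multiset (Fin n)).map lam).prod))
    (fun i : Sym (Fin n) k => X - C (((i : Multiset (Fin n)).map ev).prod))
    (fun i => ?_)).symm
  show X - C (Multiset.map lam ↑i).prod =
    X - C (Multiset.map ev ↑(Sym.map (⇑σ) i)).prod
  rw [Sym.coe_map, Multiset.map_map, ← hσ]
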